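/- arXiv:1707.05398 — 3 statements merged into one kernel-verified Lean document; each statement's English description precedes it below -/
import Mathlib

section
/- Fix constants M > 0, ρ > 0, τ > 0 and a constant B ≥ 0. Let (a[t])_{t≥1}, (s[t])_{t≥1} be nonnegative sequences with a[t] ≤ B for all t (bounded arrivals). Define two queue processes with Q[0] = λ[0] = 0 by Q[t] ≤ [Q[t−1] − s[t]]₊ + a[t] and λ[t] = λ[t−1] − ρτ·s[t] + ρτ·a[t]. If |λ[t]| ≤ M for all t, then Q[t] ≤ 2M/(ρτ) + B for all t. -/
/-- Scalar physical/virtual queue comparison: if the virtual queue `λ` (updated without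
projection) stays bounded by `M`, then the physical queue `Q` (updated with the
positive-part projection) is bounded by `2M/(ρτ) + B`. -/
theorem stmt7 (M ρ τ B : ℝ) (hM : 0 < M) (hρ : 0 < ρ) (hτ : 0 < τ) (hB : 0 ≤ B)
    (Q lam a s : ℕ → ℝ)
    (ha : ∀ t, 0 ≤ a t) (hs : ∀ t, 0 ≤ s t) (haB : ∀ t, a t ≤ B)
    (hQ0 : Q 0 = 0) (hlam0 : lam 0 = 0)
    (hQ : ∀ t : ℕ, 1 ≤ t → Q t ≤ max (Q (t - 1) - s t) 0 + a t)
    (hlam : ∀ t : ℕ, 1 ≤ t → lam t = lam (t - 1) - ρ * τ * s t + ρ * τ * a t)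
    (hlamM : ∀ t, |lam t| ≤ M) :
    ∀ t, Q t ≤ 2 * M / (ρ * τ) + B := by
  have hrt : 0 < ρ * τ := mul_pos hρ hτ
  have key : ∀ t, Q t ≤ (lam t + M + ρ * τ * B) / (ρ * τ) := by
    intro t
    induction t with
    | zero =>
        rw [hQ0, hlam0]
        positivity
    | succ n ih =>
        have h1 : 1 ≤ n + 1 := Nat.le_add_left 1 n
        have hQn := hQ (n+1) h1
        have hln := hlam (n+1) h1
        simp only [Nat.add_sub_cancel] at hQn hln
        have hlb : -M ≤ lam (n+1) := neg_le_of_abs_le (hlamM (n+1))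
        rcases le_total (Q n - s (n+1)) 0 with hc | hc
        · have hQa : Q (n+1) ≤ a (n+1) := by
            calc Q (n+1) ≤ max (Q n - s (n+1)) 0 + a (n+1) := hQn
            _ = a (n+1) := by rw [max_eq_right hc]; ring
          refine hQa.trans ?_
          rw [le_div_iff₀ hrt]
          nlinarith [haB (n+1)]
        · have hmax : max (Q n - s (n+1)) 0 = Q n - s (n+1) := max_eq_left hc
          rw [hmax] at hQn
          rw [le_div_iff₀ hrt] at ih ⊢
          nlinarith
  intro t
  have hk := key t
  have hub : lam t ≤ M := le_of_abs_le (hlamM t)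
  rw [le_div_iff₀ hrt] at hk
  have : Q t * (ρ * τ) ≤ 2 * M + ρ * τ * B := by nlinarith
  rw [div_add' _ _ _ hrt.ne', le_div_iff₀ hrt]
  nlinarith
end

section
/- Consider the projection of a point v ∈ ℝᴰ onto the simplex S = {r ∈ ℝᴰ : Σ_d r_d ≤ C, r_d ≥ 0} with C > 0, i.e., the minimizer of ‖r − v‖² over S. If Σ_d [v_d]₊ ≤ C then the projection is r_d = [v_d]₊. Otherwise the projection has the form r_d = [v_d − θ*]₊ where θ* > 0 is the unique real number satisfying Σ_d [v_d − θ*]₊ = C. -/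
open Finset

/-- Projection onto the simplex `{r : Σ_d r_d ≤ C, r ≥ 0}`: if `Σ_d [v_d]₊ ≤ C` the
projection is `[v]₊`; otherwise it is `[v − θ*]₊` for the unique `θ* > 0` with
`Σ_d [v_d − θ*]₊ = C`. A point `p` is "the projection" iff it is feasible and minimizes
the squared Euclidean distance to `v` over the simplex. -/
theorem stmt9 {D : ℕ} (C : ℝ) (hC : 0 < C) (v : Fin D → ℝ)
    (S : Set (Fin D → ℝ))
    (hS : S = {r : Fin D → ℝ | (∑ d, r d) ≤ C ∧ ∀ d, 0 ≤ r d})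
    (IsProj : (Fin D → ℝ) → Prop)
    (hIsProj : ∀ p, IsProj p ↔ p ∈ S ∧ ∀ r ∈ S, (∑ d, (p d - v d) ^ 2) ≤ ∑ d, (r d - v d) ^ 2) :
    ((∑ d, max (v d) 0) ≤ C → IsProj (fun d => max (v d) 0)) ∧
    ((∑ d, max (v d) 0) > C →
      ∃! θ : ℝ, 0 < θ ∧ (∑ d, max (v d - θ) 0) = C ∧ IsProj (fun d => max (v d - θ) 0)) := by
  subst hS
  -- general minimality lemma
  have key : ∀ θ : ℝ, 0 ≤ θ → (∑ d, max (v d - θ) 0) ≤ C →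
      (θ = 0 ∨ (∑ d, max (v d - θ) 0) = C) →
      IsProj (fun d => max (v d - θ) 0) := by
    intro θ hθ hsum hcase
    rw [hIsProj]
    refine ⟨⟨hsum, fun d => le_max_right _ _⟩, ?_⟩
    intro r hr
    obtain ⟨hr1, hr2⟩ := hr
    set p : Fin D → ℝ := fun d => max (v d - θ) 0 with hp
    have hpoint : ∀ d, -θ * (r d - p d) ≤ (r d - p d) * (p d - v d) := by
      intro d
      rcases le_or_gt (v d - θ) 0 with h | h
      · have hpd : p d = 0 := max_eq_right h
        rw [hpd]
        have := hr2 d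
        nlinarith
      · have hpd : p d = v d - θ := max_eq_left h.le
        rw [hpd]
        nlinarith [hr2 d]
    have h1 : -θ * ((∑ d, r d) - (∑ d, p d)) ≤ ∑ d, (r d - p d) * (p d - v d) := by
      rw [← Finset.sum_sub_distrib, Finset.mul_sum]
      exact Finset.sum_le_sum fun d _ => hpoint d
    have h2 : 0 ≤ -θ * ((∑ d, r d) - (∑ d, p d)) := by
      rcases hcase with h | h
      · simp [h]
      · have : (∑ d, p d) = C := h
        nlinarith
    have h3 : 0 ≤ ∑ d, (r d - p d) ^ 2 := Finset.sum_nonneg fun d _ => sq_nonneg _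
    have hexp : (∑ d, (r d - v d) ^ 2) - (∑ d, (p d - v d) ^ 2)
        = (∑ d, (r d - p d) ^ 2) + 2 * ∑ d, (r d - p d) * (p d - v d) := by
      rw [Finset.mul_sum, ← Finset.sum_sub_distrib, ← Finset.sum_add_distrib]
      exact Finset.sum_congr rfl fun d _ => by ring
    nlinarith [h1, h2, h3, hexp]
  have huniq : ∀ a b : ℝ, a < b → (∑ d, max (v d - a) 0) = C →
      (∑ d, max (v d - b) 0) = C → False := by
    intro a b hab ha hb
    have hex : ∃ d : Fin D, 0 < v d - a := by
      by_contra h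
      push_neg at h
      have h0 : (∑ d, max (v d - a) 0) = 0 :=
        Finset.sum_eq_zero fun d _ => max_eq_right (h d)
      rw [ha] at h0
      linarith
    obtain ⟨d0, hd0⟩ := hex
    have hlt : (∑ d, max (v d - b) 0) < ∑ d, max (v d - a) 0 := by
      apply Finset.sum_lt_sum
      · intro d _
        exact max_le_max (by linarith) le_rfl
      · refine ⟨d0, Finset.mem_univ d0, ?_⟩
        rw [max_eq_left hd0.le]
        exact max_lt (by linarith) hd0
    rw [ha, hb] at hlt
    exact lt_irrefl _ hlt
  constructor
  · -- case Σ [v]₊ ≤ C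
    intro hle
    have hsum0 : (∑ d, max (v d - 0) 0) ≤ C := by simpa using hle
    have := key 0 le_rfl hsum0 (Or.inl rfl)
    have hfun : (fun d => max (v d - 0) 0) = (fun d => max (v d) 0) := by
      funext d; rw [sub_zero]
    rwa [hfun] at this
  · -- case Σ [v]₊ > C
    intro hgt
    set f : ℝ → ℝ := fun θ => ∑ d, max (v d - θ) 0 with hf
    have hcont : Continuous f := by
      apply continuous_finset_sum
      intro d _
      exact (continuous_const.sub continuous_id).max continuous_const
    set B := ∑ d, max (v d) 0 with hBdef
    have hBnn : 0 ≤ B := Finset.sum_nonneg fun d _ => le_max_right _ _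
    have hf0 : f 0 = B := by simp [hf, hBdef]
    have hfB : f B = 0 := by
      apply Finset.sum_eq_zero
      intro d _
      apply max_eq_right
      have h1 : v d ≤ max (v d) 0 := le_max_left _ _
      have h2 : max (v d) 0 ≤ B := by
        rw [hBdef]
        exact Finset.single_le_sum (fun i _ => le_max_right (v i) 0) (Finset.mem_univ d)
      linarith
    have hCmem : C ∈ Set.Icc (f B) (f 0) := by
      rw [hfB, hf0]
      exact ⟨hC.le, hgt.le⟩
    obtain ⟨θ, hθmem, hfθ⟩ :=
      intermediate_value_Icc' hBnn hcont.continuousOn hCmem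
    have hθpos : 0 < θ := by
      rcases lt_or_eq_of_le hθmem.1 with h | h
      · exact h
      · exfalso
        rw [← h, hf0] at hfθ
        exact lt_irrefl _ (hfθ ▸ hgt)
    refine ⟨θ, ⟨hθpos, hfθ, key θ hθpos.le (le_of_eq hfθ) (Or.inr hfθ)⟩, ?_⟩
    rintro θ' ⟨hθ'pos, hθ'sum, -⟩
    rcases lt_trichotomy θ' θ with h | h | h
    · exact (huniq θ' θ h hθ'sum hfθ).elim
    · exact h
    · exact (huniq θ θ' h hfθ hθ'sum).elim
end

section
/- Let w ∈ ℤᴰ, B ∈ ℕ a bound with 0 ≤ r_d ≤ B for all feasible r, and let (r*, y*) be a δ-approximate maximizer (for δ < 1) of the quadratic objective (LDB²+1)·Σ_l w_l y_l − Σ_{l,d} (r_l^d)² over a feasible set where all feasible y are integer vectors with y_l = Σ_d r_l^d. Then y* exactly maximizes the linear objective Σ_l w_l y_l over feasible y, i.e., Σ_l w_l y_l* ≥ Σ_l w_l y_l for all feasible integer y. -/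
open Finset

/-- Scaling reduction from the quadratic scheduling objective to MaxWeight: a
`δ`-approximate maximizer (with `δ < 1`) of
`(LDB²+1)·Σ_l w_l y_l − Σ_{l,d} (r_l^d)²` over a feasible set of integer link-rate
vectors bounded by `B` (with `y_l = Σ_d r_l^d`) exactly maximizes the linear objective
`Σ_l w_l y_l`. -/
theorem stmt16 (L D B : ℕ) (w : Fin L → ℤ) (δ : ℝ) (hδ0 : 0 ≤ δ) (hδ : δ < 1)
    (Feas : Set ((Fin L → Fin D → ℕ) × (Fin L → ℕ)))
    (hFeas : ∀ p ∈ Feas, (∀ l, p.2 l = ∑ d, p.1 l d) ∧ ∀ l d, p.1 l d ≤ B)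
    (rStar : Fin L → Fin D → ℕ) (yStar : Fin L → ℕ) (hmem : (rStar, yStar) ∈ Feas)
    (happrox : ∀ p ∈ Feas,
      ((L * D * B ^ 2 + 1 : ℝ)) * ∑ l, (w l : ℝ) * (p.2 l : ℝ) -
          (∑ l, ∑ d, ((p.1 l d : ℝ)) ^ 2) - δ ≤
        ((L * D * B ^ 2 + 1 : ℝ)) * ∑ l, (w l : ℝ) * (yStar l : ℝ) -
          ∑ l, ∑ d, ((rStar l d : ℝ)) ^ 2) :
    ∀ p ∈ Feas, (∑ l, w l * (p.2 l : ℤ)) ≤ ∑ l, w l * (yStar l : ℤ) := by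
  intro p hp
  by_contra hlt
  push_neg at hlt
  have hZ : (∑ l, w l * (yStar l : ℤ)) + 1 ≤ ∑ l, w l * (p.2 l : ℤ) := hlt
  have hR : (∑ l, (w l : ℝ) * (yStar l : ℝ)) + 1 ≤ ∑ l, (w l : ℝ) * (p.2 l : ℝ) := by
    have := (Int.cast_le (R := ℝ)).2 hZ
    push_cast at this
    linarith
  have hQp : (∑ l, ∑ d, ((p.1 l d : ℝ)) ^ 2) ≤ (L : ℝ) * D * B ^ 2 := by
    calc (∑ l : Fin L, ∑ d : Fin D, ((p.1 l d : ℝ)) ^ 2)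
        ≤ ∑ l : Fin L, ∑ d : Fin D, (B : ℝ) ^ 2 := by
          apply Finset.sum_le_sum; intro l _
          apply Finset.sum_le_sum; intro d _
          have hb : ((p.1 l d : ℝ)) ≤ (B : ℝ) := by
            exact_mod_cast (hFeas p hp).2 l d
          have h0 : (0 : ℝ) ≤ (p.1 l d : ℝ) := by positivity
          nlinarith
      _ = (L : ℝ) * D * B ^ 2 := by
          simp [Finset.sum_const, mul_assoc]
  have hQs : (0 : ℝ) ≤ ∑ l, ∑ d, ((rStar l d : ℝ)) ^ 2 := by positivity
  have h := happrox p hp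
  have hM : (0 : ℝ) < (L * D * B ^ 2 + 1 : ℝ) := by positivity
  nlinarith [hM, hR, h, hQp, hQs]
end
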